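/- arXiv:1810.11355 — 3 statements merged into one kernel-verified Lean document; each statement's English description precedes it below -/
import Mathlib

section
/- Every sequent derivable in G3c^= is derivable in G3c^=⁻; the translation is obtained by replacing each application of Repl, using the admissibility of Repl in G3c^=⁻, by induction on the height of the given derivation. -/
open FirstOrder Language Multiset

universe u v

variable {L : FirstOrder.Language.{u, v}}

/-- Number of occurrences of the variable `v` in a term. -/
def tCount (v : ℕ) : L.Term ℕ → ℕ
  | .var w => if w = v then 1 else 0
  | .func _ ts => Finset.univ.sum fun i => tCount v (ts i)

/-- First-order formulas over the language `L` (with built-in equality),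
with natural numbers as variables. -/
inductive Fm (L : FirstOrder.Language.{u, v}) : Type (max u v) where
  | falsum : Fm L
  | equal : L.Term ℕ → L.Term ℕ → Fm L
  | rel {l : ℕ} : L.Relations l → (Fin l → L.Term ℕ) → Fm L
  | and : Fm L → Fm L → Fm L
  | or : Fm L → Fm L → Fm L
  | imp : Fm L → Fm L → Fm L
  | all : ℕ → Fm L → Fm L
  | ex : ℕ → Fm L → Fm L

namespace Fm

/-- Atomic formulas: equalities and relational atoms. -/
inductive IsAtomic : Fm L → Prop where
  | equal (t₁ t₂ : L.Term ℕ) : (Fm.equal t₁ t₂).IsAtomic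
  | rel {l : ℕ} (R : L.Relations l) (ts : Fin l → L.Term ℕ) : (Fm.rel R ts).IsAtomic

/-- Number of free occurrences of the variable `v` in a formula. -/
def fCount (v : ℕ) : Fm L → ℕ
  | falsum => 0
  | equal t₁ t₂ => tCount v t₁ + tCount v t₂
  | rel _ ts => Finset.univ.sum fun i => tCount v (ts i)
  | and A B => fCount v A + fCount v B
  | or A B => fCount v A + fCount v B
  | imp A B => fCount v A + fCount v B
  | all y A => if y = v then 0 else fCount v A
  | ex y A => if y = v then 0 else fCount v A

/-- The set of free variables of a formula. -/
def freeVars : Fm L → Set ℕ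
  | falsum => ∅
  | equal t₁ t₂ => {w | tCount w t₁ ≠ 0 ∨ tCount w t₂ ≠ 0}
  | rel _ ts => {w | ∃ i, tCount w (ts i) ≠ 0}
  | and A B => A.freeVars ∪ B.freeVars
  | or A B => A.freeVars ∪ B.freeVars
  | imp A B => A.freeVars ∪ B.freeVars
  | all y A => A.freeVars \ {y}
  | ex y A => A.freeVars \ {y}

/-- Simultaneous substitution of terms for the free variables of a formula. -/
def ssub (σ : ℕ → L.Term ℕ) : Fm L → Fm L
  | falsum => falsum
  | equal t₁ t₂ => equal (t₁.subst σ) (t₂.subst σ)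
  | rel R ts => rel R fun i => (ts i).subst σ
  | and A B => and (A.ssub σ) (B.ssub σ)
  | or A B => or (A.ssub σ) (B.ssub σ)
  | imp A B => imp (A.ssub σ) (B.ssub σ)
  | all y A => all y (A.ssub (Function.update σ y (Term.var y)))
  | ex y A => ex y (A.ssub (Function.update σ y (Term.var y)))

/-- `A.subst v t` is `A[v/t]`, the substitution of the term `t`
for the variable `v` in `A`. -/
def subst (v : ℕ) (t : L.Term ℕ) (A : Fm L) : Fm L :=
  A.ssub (Function.update (Term.var : ℕ → L.Term ℕ) v t)

/-- `t` is free for `x` in `A` (no free occurrence of `x` lies in the scope of a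
quantifier binding a variable of `t`). -/
def freeFor (t : L.Term ℕ) (x : ℕ) : Fm L → Prop
  | falsum => True
  | equal _ _ => True
  | rel _ _ => True
  | and A B => freeFor t x A ∧ freeFor t x B
  | or A B => freeFor t x A ∧ freeFor t x B
  | imp A B => freeFor t x A ∧ freeFor t x B
  | all y A => x = y ∨ x ∉ A.freeVars ∨ (tCount y t = 0 ∧ freeFor t x A)
  | ex y A => x = y ∨ x ∉ A.freeVars ∨ (tCount y t = 0 ∧ freeFor t x A)

end Fm

/-- The rule Repl, given as the relation between the antecedent of the premiss and the
antecedent of the conclusion (the succedent is unchanged): from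
`s = r, P[v/s], P[v/r], Γ ⇒ Δ` infer `s = r, P[v/s], Γ ⇒ Δ`, for `P` atomic and
`v` not occurring in `s, r`. -/
def ReplFull (L : FirstOrder.Language.{u, v}) : Multiset (Fm L) → Multiset (Fm L) → Prop := fun Γp Γc =>
  ∃ (s r : L.Term ℕ) (v : ℕ) (P : Fm L) (Γ : Multiset (Fm L)),
    P.IsAtomic ∧ tCount v s = 0 ∧ tCount v r = 0 ∧
    Γp = Fm.equal s r ::ₘ P.subst v s ::ₘ P.subst v r ::ₘ Γ ∧
    Γc = Fm.equal s r ::ₘ P.subst v s ::ₘ Γ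

/-- The rule Repl⁻: from `s = r, P[v/r], Γ ⇒ Δ` infer `s = r, P[v/s], Γ ⇒ Δ`,
for `P` atomic and `v` not occurring in `s, r`. -/
def ReplMinus (L : FirstOrder.Language.{u, v}) : Multiset (Fm L) → Multiset (Fm L) → Prop := fun Γp Γc =>
  ∃ (s r : L.Term ℕ) (v : ℕ) (P : Fm L) (Γ : Multiset (Fm L)),
    P.IsAtomic ∧ tCount v s = 0 ∧ tCount v r = 0 ∧
    Γp = Fm.equal s r ::ₘ P.subst v r ::ₘ Γ ∧
    Γc = Fm.equal s r ::ₘ P.subst v s ::ₘ Γ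

/-- The rule Repl₁⁻: Repl⁻ restricted to atomic `P` with exactly one occurrence of `v`. -/
def ReplMinus1 (L : FirstOrder.Language.{u, v}) : Multiset (Fm L) → Multiset (Fm L) → Prop := fun Γp Γc =>
  ∃ (s r : L.Term ℕ) (v : ℕ) (P : Fm L) (Γ : Multiset (Fm L)),
    P.IsAtomic ∧ tCount v s = 0 ∧ tCount v r = 0 ∧ Fm.fCount v P = 1 ∧
    Γp = Fm.equal s r ::ₘ P.subst v r ::ₘ Γ ∧
    Γc = Fm.equal s r ::ₘ P.subst v s ::ₘ Γ

/-- `DerC rp n Γ Δ`: the sequent `Γ ⇒ Δ` has a derivation of height at most `n` in the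
classical multisuccedent G3 calculus `G3c` with the equality rule Ref and the
replacement rule given by `rp` (e.g. `ReplFull L` for `G3c^=`, `ReplMinus L` for `G3c^=⁻`,
`ReplMinus1 L` for `G3c₁^=⁻`). -/
inductive DerC (rp : Multiset (Fm L) → Multiset (Fm L) → Prop) :
    ℕ → Multiset (Fm L) → Multiset (Fm L) → Prop where
  | ax {n : ℕ} {Γ Δ : Multiset (Fm L)} {P : Fm L} (hP : P.IsAtomic) :
      DerC rp n (P ::ₘ Γ) (P ::ₘ Δ)
  | botL {n : ℕ} {Γ Δ : Multiset (Fm L)} : DerC rp n (Fm.falsum ::ₘ Γ) Δ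
  | andL {n : ℕ} {Γ Δ : Multiset (Fm L)} {A B : Fm L} :
      DerC rp n (A ::ₘ B ::ₘ Γ) Δ → DerC rp (n + 1) (Fm.and A B ::ₘ Γ) Δ
  | andR {n : ℕ} {Γ Δ : Multiset (Fm L)} {A B : Fm L} :
      DerC rp n Γ (A ::ₘ Δ) → DerC rp n Γ (B ::ₘ Δ) → DerC rp (n + 1) Γ (Fm.and A B ::ₘ Δ)
  | orL {n : ℕ} {Γ Δ : Multiset (Fm L)} {A B : Fm L} :
      DerC rp n (A ::ₘ Γ) Δ → DerC rp n (B ::ₘ Γ) Δ → DerC rp (n + 1) (Fm.or A B ::ₘ Γ) Δ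
  | orR {n : ℕ} {Γ Δ : Multiset (Fm L)} {A B : Fm L} :
      DerC rp n Γ (A ::ₘ B ::ₘ Δ) → DerC rp (n + 1) Γ (Fm.or A B ::ₘ Δ)
  | impL {n : ℕ} {Γ Δ : Multiset (Fm L)} {A B : Fm L} :
      DerC rp n Γ (A ::ₘ Δ) → DerC rp n (B ::ₘ Γ) Δ → DerC rp (n + 1) (Fm.imp A B ::ₘ Γ) Δ
  | impR {n : ℕ} {Γ Δ : Multiset (Fm L)} {A B : Fm L} :
      DerC rp n (A ::ₘ Γ) (B ::ₘ Δ) → DerC rp (n + 1) Γ (Fm.imp A B ::ₘ Δ)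
  | allL {n : ℕ} {Γ Δ : Multiset (Fm L)} {x : ℕ} {t : L.Term ℕ} {A : Fm L}
      (hf : Fm.freeFor t x A) :
      DerC rp n (A.subst x t ::ₘ Fm.all x A ::ₘ Γ) Δ → DerC rp (n + 1) (Fm.all x A ::ₘ Γ) Δ
  | allR {n : ℕ} {Γ Δ : Multiset (Fm L)} {x y : ℕ} {A : Fm L}
      (hf : Fm.freeFor (Term.var y) x A) (hy : y ∉ (Fm.all x A).freeVars)
      (hΓ : ∀ C ∈ Γ, y ∉ Fm.freeVars C) (hΔ : ∀ C ∈ Δ, y ∉ Fm.freeVars C) :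
      DerC rp n Γ (A.subst x (Term.var y) ::ₘ Δ) → DerC rp (n + 1) Γ (Fm.all x A ::ₘ Δ)
  | exL {n : ℕ} {Γ Δ : Multiset (Fm L)} {x y : ℕ} {A : Fm L}
      (hf : Fm.freeFor (Term.var y) x A) (hy : y ∉ (Fm.ex x A).freeVars)
      (hΓ : ∀ C ∈ Γ, y ∉ Fm.freeVars C) (hΔ : ∀ C ∈ Δ, y ∉ Fm.freeVars C) :
      DerC rp n (A.subst x (Term.var y) ::ₘ Γ) Δ → DerC rp (n + 1) (Fm.ex x A ::ₘ Γ) Δ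
  | exR {n : ℕ} {Γ Δ : Multiset (Fm L)} {x : ℕ} {t : L.Term ℕ} {A : Fm L}
      (hf : Fm.freeFor t x A) :
      DerC rp n Γ (A.subst x t ::ₘ Fm.ex x A ::ₘ Δ) → DerC rp (n + 1) Γ (Fm.ex x A ::ₘ Δ)
  | ref {n : ℕ} {Γ Δ : Multiset (Fm L)} (t : L.Term ℕ) :
      DerC rp n (Fm.equal t t ::ₘ Γ) Δ → DerC rp (n + 1) Γ Δ
  | repl {n : ℕ} {Γp Γc Δ : Multiset (Fm L)} (h : rp Γp Γc) :
      DerC rp n Γp Δ → DerC rp (n + 1) Γc Δ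

/-- `DerI rp n Γ Δ`: the sequent `Γ ⇒ Δ` has a derivation of height at most `n` in the
intuitionistic multisuccedent G3 calculus (the right rules for `→` and `∀` have
single-succedent premisses, and L→ repeats its principal formula) with the equality rule
Ref and the replacement rule given by `rp`. -/
inductive DerI (rp : Multiset (Fm L) → Multiset (Fm L) → Prop) :
    ℕ → Multiset (Fm L) → Multiset (Fm L) → Prop where
  | ax {n : ℕ} {Γ Δ : Multiset (Fm L)} {P : Fm L} (hP : P.IsAtomic) :
      DerI rp n (P ::ₘ Γ) (P ::ₘ Δ)
  | botL {n : ℕ} {Γ Δ : Multiset (Fm L)} : DerI rp n (Fm.falsum ::ₘ Γ) Δ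
  | andL {n : ℕ} {Γ Δ : Multiset (Fm L)} {A B : Fm L} :
      DerI rp n (A ::ₘ B ::ₘ Γ) Δ → DerI rp (n + 1) (Fm.and A B ::ₘ Γ) Δ
  | andR {n : ℕ} {Γ Δ : Multiset (Fm L)} {A B : Fm L} :
      DerI rp n Γ (A ::ₘ Δ) → DerI rp n Γ (B ::ₘ Δ) → DerI rp (n + 1) Γ (Fm.and A B ::ₘ Δ)
  | orL {n : ℕ} {Γ Δ : Multiset (Fm L)} {A B : Fm L} :
      DerI rp n (A ::ₘ Γ) Δ → DerI rp n (B ::ₘ Γ) Δ → DerI rp (n + 1) (Fm.or A B ::ₘ Γ) Δ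
  | orR {n : ℕ} {Γ Δ : Multiset (Fm L)} {A B : Fm L} :
      DerI rp n Γ (A ::ₘ B ::ₘ Δ) → DerI rp (n + 1) Γ (Fm.or A B ::ₘ Δ)
  | impL {n : ℕ} {Γ Δ : Multiset (Fm L)} {A B : Fm L} :
      DerI rp n (Fm.imp A B ::ₘ Γ) (A ::ₘ Δ) → DerI rp n (B ::ₘ Γ) Δ →
      DerI rp (n + 1) (Fm.imp A B ::ₘ Γ) Δ
  | impR {n : ℕ} {Γ Δ : Multiset (Fm L)} {A B : Fm L} :
      DerI rp n (A ::ₘ Γ) {B} → DerI rp (n + 1) Γ (Fm.imp A B ::ₘ Δ)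
  | allL {n : ℕ} {Γ Δ : Multiset (Fm L)} {x : ℕ} {t : L.Term ℕ} {A : Fm L}
      (hf : Fm.freeFor t x A) :
      DerI rp n (A.subst x t ::ₘ Fm.all x A ::ₘ Γ) Δ → DerI rp (n + 1) (Fm.all x A ::ₘ Γ) Δ
  | allR {n : ℕ} {Γ Δ : Multiset (Fm L)} {x y : ℕ} {A : Fm L}
      (hf : Fm.freeFor (Term.var y) x A) (hy : y ∉ (Fm.all x A).freeVars)
      (hΓ : ∀ C ∈ Γ, y ∉ Fm.freeVars C) :
      DerI rp n Γ {A.subst x (Term.var y)} → DerI rp (n + 1) Γ (Fm.all x A ::ₘ Δ)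
  | exL {n : ℕ} {Γ Δ : Multiset (Fm L)} {x y : ℕ} {A : Fm L}
      (hf : Fm.freeFor (Term.var y) x A) (hy : y ∉ (Fm.ex x A).freeVars)
      (hΓ : ∀ C ∈ Γ, y ∉ Fm.freeVars C) (hΔ : ∀ C ∈ Δ, y ∉ Fm.freeVars C) :
      DerI rp n (A.subst x (Term.var y) ::ₘ Γ) Δ → DerI rp (n + 1) (Fm.ex x A ::ₘ Γ) Δ
  | exR {n : ℕ} {Γ Δ : Multiset (Fm L)} {x : ℕ} {t : L.Term ℕ} {A : Fm L}
      (hf : Fm.freeFor t x A) :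
      DerI rp n Γ (A.subst x t ::ₘ Fm.ex x A ::ₘ Δ) → DerI rp (n + 1) Γ (Fm.ex x A ::ₘ Δ)
  | ref {n : ℕ} {Γ Δ : Multiset (Fm L)} (t : L.Term ℕ) :
      DerI rp n (Fm.equal t t ::ₘ Γ) Δ → DerI rp (n + 1) Γ Δ
  | repl {n : ℕ} {Γp Γc Δ : Multiset (Fm L)} (h : rp Γp Γc) :
      DerI rp n Γp Δ → DerI rp (n + 1) Γc Δ

/-! ### Auxiliary development -/

/-- A bound on the variables occurring in a term. -/
def tBound : L.Term ℕ → ℕ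
  | .var w => w + 1
  | .func _ ts => Finset.univ.sup fun i => tBound (ts i)

lemma tCount_eq_zero_of_le {t : L.Term ℕ} {w : ℕ} (h : tBound t ≤ w) : tCount w t = 0 := by
  induction t with
  | var v =>
    simp only [tBound] at h
    simp only [tCount]
    have : v ≠ w := by omega
    simp [this]
  | func f ts ih =>
    simp only [tBound, Finset.sup_le_iff] at h
    simp only [tCount]
    exact Finset.sum_eq_zero fun i _ => ih i (h i (Finset.mem_univ i))

lemma tsubst_id {v : ℕ} {u : L.Term ℕ} {t : L.Term ℕ} (h : tCount v t = 0) :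
    t.subst (Function.update (Term.var : ℕ → L.Term ℕ) v u) = t := by
  induction t with
  | var w =>
    simp only [tCount] at h
    have hw : w ≠ v := by intro e; subst e; simp at h
    simp [Term.subst, Function.update_apply, hw]
  | func f ts ih =>
    simp only [tCount, Finset.sum_eq_zero_iff, Finset.mem_univ, forall_true_left] at h
    simp only [Term.subst]
    exact congrArg _ (funext fun i => ih i (h i))

lemma atomic_subst {P : Fm L} (h : P.IsAtomic) (v : ℕ) (t : L.Term ℕ) :
    (P.subst v t).IsAtomic := by
  cases h with
  | equal a b => exact Fm.IsAtomic.equal _ _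
  | rel R ts => exact Fm.IsAtomic.rel _ _

/-- A formula is an equality atom. -/
def IsEquation (Q : Fm L) : Prop := ∃ a b, Q = Fm.equal a b

lemma isEquation_subst_iff {P : Fm L} {v : ℕ} {t : L.Term ℕ} :
    IsEquation (P.subst v t) ↔ IsEquation P := by
  cases P <;> simp [IsEquation, Fm.subst, Fm.ssub]

lemma subst_equal (a b : L.Term ℕ) (v : ℕ) (t : L.Term ℕ) :
    (Fm.equal a b).subst v t
      = Fm.equal (a.subst (Function.update (Term.var : ℕ → L.Term ℕ) v t))
          (b.subst (Function.update (Term.var : ℕ → L.Term ℕ) v t)) := rfl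

lemma not_atomic_falsum : ¬ (Fm.falsum : Fm L).IsAtomic := fun h => nomatch h
lemma not_atomic_and {A B : Fm L} : ¬ (Fm.and A B).IsAtomic := fun h => nomatch h
lemma not_atomic_or {A B : Fm L} : ¬ (Fm.or A B).IsAtomic := fun h => nomatch h
lemma not_atomic_imp {A B : Fm L} : ¬ (Fm.imp A B).IsAtomic := fun h => nomatch h
lemma not_atomic_all {x : ℕ} {A : Fm L} : ¬ (Fm.all x A).IsAtomic := fun h => nomatch h
lemma not_atomic_ex {x : ℕ} {A : Fm L} : ¬ (Fm.ex x A).IsAtomic := fun h => nomatch h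

/-- Equational closure of a collection of atomic formulas:
closed under reflexivity and replacement. -/
inductive Cl (S : Fm L → Prop) : Fm L → Prop where
  | mem {A : Fm L} (h : S A) (hA : A.IsAtomic) : Cl S A
  | refl (t : L.Term ℕ) : Cl S (Fm.equal t t)
  | fwd {s r : L.Term ℕ} {v : ℕ} {P : Fm L} (hP : P.IsAtomic)
      (hs : tCount v s = 0) (hr : tCount v r = 0)
      (he : Cl S (Fm.equal s r)) (hp : Cl S (P.subst v s)) : Cl S (P.subst v r)

lemma Cl.atomic {S : Fm L → Prop} {Q : Fm L} (h : Cl S Q) : Q.IsAtomic := by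
  induction h with
  | mem _ hA => exact hA
  | refl t => exact Fm.IsAtomic.equal _ _
  | fwd hP _ _ _ _ _ _ => exact atomic_subst hP _ _

lemma Cl.mono {S S' : Fm L → Prop} (hs : ∀ A, S A → A.IsAtomic → Cl S' A)
    {Q : Fm L} (h : Cl S Q) : Cl S' Q := by
  induction h with
  | mem h hA => exact hs _ h hA
  | refl t => exact Cl.refl t
  | fwd hP hcs hcr _ _ ihe ihp => exact Cl.fwd hP hcs hcr ihe ihp

/-- One upward proof-search step in the Minus calculus: reading a `Ref` or `Repl⁻`
inference from conclusion (first argument) to premiss (second argument). -/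
inductive StepR : Multiset (Fm L) → Multiset (Fm L) → Prop where
  | ref (t : L.Term ℕ) (Γ : Multiset (Fm L)) : StepR Γ (Fm.equal t t ::ₘ Γ)
  | rw {s r : L.Term ℕ} {v : ℕ} {P : Fm L} (X : Multiset (Fm L)) (hP : P.IsAtomic)
      (hs : tCount v s = 0) (hr : tCount v r = 0) :
      StepR (Fm.equal s r ::ₘ P.subst v s ::ₘ X) (Fm.equal s r ::ₘ P.subst v r ::ₘ X)

def Steps : Multiset (Fm L) → Multiset (Fm L) → Prop := Relation.ReflTransGen StepR

lemma StepR.sound {Γ Γ' Δ : Multiset (Fm L)} {n : ℕ} (h : StepR Γ Γ')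
    (hd : DerC (ReplMinus L) n Γ' Δ) : DerC (ReplMinus L) (n + 1) Γ Δ := by
  cases h with
  | ref t Γ => exact DerC.ref t hd
  | rw X hP hs hr => exact DerC.repl ⟨_, _, _, _, X, hP, hs, hr, rfl, rfl⟩ hd

lemma Steps.sound {Γ Γ' Δ : Multiset (Fm L)} (h : Steps Γ Γ')
    (hd : ∃ n, DerC (ReplMinus L) n Γ' Δ) : ∃ n, DerC (ReplMinus L) n Γ Δ := by
  induction h with
  | refl => exact hd
  | tail _ hbc ih =>
    obtain ⟨n, d⟩ := hd
    exact ih ⟨n + 1, hbc.sound d⟩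

/-- Any equation in the closure of the atoms of `Γ` can be materialized in the
antecedent (as an extra copy, on top of junk `J`) by upward `Ref`/`Repl⁻` steps. -/
lemma matEq {S : Fm L → Prop} {Q : Fm L} (h : Cl S Q) :
    IsEquation Q → ∀ (Γ C : Multiset (Fm L)), (∀ a, S a → a ∈ Γ) →
      ∃ J, Steps (C + Γ) (Q ::ₘ (J + (C + Γ))) := by
  induction h with
  | @mem Q hQS _ =>
    rintro ⟨a, b, rfl⟩ Γ C hmem
    set v := max (tBound a) (tBound b) with hv
    have ha : tCount v a = 0 := tCount_eq_zero_of_le (le_max_left _ _)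
    have hb : tCount v b = 0 := tCount_eq_zero_of_le (le_max_right _ _)
    set P : Fm L := Fm.equal a (Term.var v) with hP
    have hPa : P.subst v a = Fm.equal a a := by
      rw [hP, subst_equal, tsubst_id ha]
      simp [Term.subst]
    have hPb : P.subst v b = Fm.equal a b := by
      rw [hP, subst_equal, tsubst_id ha]
      simp [Term.subst]
    obtain ⟨Γ₀, h0⟩ := Multiset.exists_cons_of_mem
      (Multiset.mem_add.mpr (Or.inr (hmem _ hQS)))
    refine ⟨0, ?_⟩
    rw [zero_add, h0]
    have step1 : StepR (L := L) (Fm.equal a b ::ₘ Γ₀)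
        (Fm.equal a a ::ₘ Fm.equal a b ::ₘ Γ₀) := StepR.ref a _
    have step2 : StepR (L := L) (Fm.equal a b ::ₘ Fm.equal a a ::ₘ Γ₀)
        (Fm.equal a b ::ₘ Fm.equal a b ::ₘ Γ₀) := by
      have := StepR.rw (s := a) (r := b) (v := v) (P := P) Γ₀
        (Fm.IsAtomic.equal _ _) ha hb
      rwa [hPa, hPb] at this
    rw [Multiset.cons_swap] at step2
    exact (Relation.ReflTransGen.single step1).tail step2
  | refl t =>
    rintro - Γ C hmem
    exact ⟨0, by rw [zero_add]; exact Relation.ReflTransGen.single (StepR.ref t _)⟩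
  | @fwd s r v P hP hs hr he hp ihe ihp =>
    intro hQ Γ C hmem
    have hPeq : IsEquation P := isEquation_subst_iff.mp hQ
    obtain ⟨J₁, S₁⟩ := ihe ⟨s, r, rfl⟩ Γ C hmem
    obtain ⟨J₂, S₂⟩ := ihp (isEquation_subst_iff.mpr hPeq) Γ (Fm.equal s r ::ₘ (J₁ + C)) hmem
    have e1 : (Fm.equal s r ::ₘ (J₁ + C)) + Γ = Fm.equal s r ::ₘ (J₁ + (C + Γ)) := by
      simp only [← Multiset.singleton_add]; abel
    rw [e1] at S₂
    have S₁₂ := S₁.trans S₂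
    have e2 : P.subst v s ::ₘ (J₂ + (Fm.equal s r ::ₘ (J₁ + (C + Γ))))
        = Fm.equal s r ::ₘ P.subst v s ::ₘ (J₂ + (J₁ + (C + Γ))) := by
      simp only [← Multiset.singleton_add]; abel
    rw [e2] at S₁₂
    have step3 := StepR.rw (s := s) (r := r) (v := v) (P := P)
      (J₂ + (J₁ + (C + Γ))) hP hs hr
    have e3 : Fm.equal s r ::ₘ P.subst v r ::ₘ (J₂ + (J₁ + (C + Γ)))
        = P.subst v r ::ₘ ((Fm.equal s r ::ₘ (J₁ + J₂)) + (C + Γ)) := by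
      simp only [← Multiset.singleton_add]; abel
    rw [e3] at step3
    exact ⟨Fm.equal s r ::ₘ (J₁ + J₂), S₁₂.tail step3⟩

/-- Any atom in the closure of the atoms of `Γ` can be materialized in the
antecedent by upward `Ref`/`Repl⁻` steps, preserving an arbitrary context `C`. -/
lemma matAtom {S : Fm L → Prop} {Q : Fm L} (h : Cl S Q) :
    ∀ (Γ C : Multiset (Fm L)), (∀ a, S a → a ∈ Γ) →
      ∃ Γ', Steps (C + Γ) (Q ::ₘ (C + Γ')) := by
  induction h with
  | @mem Q hQS _ =>
    intro Γ C hmem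
    obtain ⟨Γ₀, h0⟩ := Multiset.exists_cons_of_mem (hmem _ hQS)
    exact ⟨Γ₀, by rw [h0, Multiset.add_cons]; exact Relation.ReflTransGen.refl⟩
  | refl t =>
    intro Γ C hmem
    exact ⟨Γ, Relation.ReflTransGen.single (StepR.ref t _)⟩
  | @fwd s r v P hP hs hr he hp _ ihp =>
    intro Γ C hmem
    obtain ⟨J₁, S₁⟩ := matEq he ⟨s, r, rfl⟩ Γ C hmem
    obtain ⟨Γ₂, S₂⟩ := ihp Γ (Fm.equal s r ::ₘ (J₁ + C)) hmem
    have e1 : (Fm.equal s r ::ₘ (J₁ + C)) + Γ = Fm.equal s r ::ₘ (J₁ + (C + Γ)) := by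
      simp only [← Multiset.singleton_add]; abel
    rw [e1] at S₂
    have S₁₂ := S₁.trans S₂
    have e2 : P.subst v s ::ₘ ((Fm.equal s r ::ₘ (J₁ + C)) + Γ₂)
        = Fm.equal s r ::ₘ P.subst v s ::ₘ (J₁ + (C + Γ₂)) := by
      simp only [← Multiset.singleton_add]; abel
    rw [e2] at S₁₂
    have step3 := StepR.rw (s := s) (r := r) (v := v) (P := P)
      (J₁ + (C + Γ₂)) hP hs hr
    have e3 : Fm.equal s r ::ₘ P.subst v r ::ₘ (J₁ + (C + Γ₂))
        = P.subst v r ::ₘ (C + (Fm.equal s r ::ₘ (J₁ + Γ₂))) := by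
      simp only [← Multiset.singleton_add]; abel
    rw [e3] at step3
    exact ⟨Fm.equal s r ::ₘ (J₁ + Γ₂), S₁₂.tail step3⟩

/-- If `Q` is in the equational closure of `Γ₁`, then `Γ₁ ⇒ Q, Δ` is derivable
in the Minus calculus. -/
lemma axMat {Γ₁ Δ : Multiset (Fm L)} {Q : Fm L} (h : Cl (· ∈ Γ₁) Q) :
    ∃ n, DerC (ReplMinus L) n Γ₁ (Q ::ₘ Δ) := by
  obtain ⟨Γ', hs⟩ := matAtom h Γ₁ 0 (fun a ha => ha)
  rw [zero_add] at hs
  exact hs.sound ⟨0, DerC.ax h.atomic⟩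

lemma split_cons {C : Fm L} {Γ₀ Γ₁ D : Multiset (Fm L)} (h : C ::ₘ Γ₀ = Γ₁ + D) :
    (∃ Γ₁', Γ₁ = C ::ₘ Γ₁' ∧ Γ₀ = Γ₁' + D) ∨ (∃ D', D = C ::ₘ D' ∧ Γ₀ = Γ₁ + D') := by
  have hc : C ∈ Γ₁ + D := h ▸ Multiset.mem_cons_self C Γ₀
  rcases Multiset.mem_add.mp hc with h1 | h1
  · obtain ⟨Γ₁', rfl⟩ := Multiset.exists_cons_of_mem h1
    rw [Multiset.cons_add] at h
    exact Or.inl ⟨Γ₁', rfl, (Multiset.cons_inj_right C).mp h⟩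
  · obtain ⟨D', rfl⟩ := Multiset.exists_cons_of_mem h1
    rw [Multiset.add_cons] at h
    exact Or.inr ⟨D', rfl, (Multiset.cons_inj_right C).mp h⟩

lemma DerC.succ {rp : Multiset (Fm L) → Multiset (Fm L) → Prop} {n : ℕ}
    {Γ Δ : Multiset (Fm L)} (h : DerC rp n Γ Δ) : DerC rp (n + 1) Γ Δ := by
  induction h with
  | ax hP => exact .ax hP
  | botL => exact .botL
  | andL _ ih => exact .andL ih
  | andR _ _ ih1 ih2 => exact .andR ih1 ih2
  | orL _ _ ih1 ih2 => exact .orL ih1 ih2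
  | orR _ ih => exact .orR ih
  | impL _ _ ih1 ih2 => exact .impL ih1 ih2
  | impR _ ih => exact .impR ih
  | allL hf _ ih => exact .allL hf ih
  | allR hf hy hΓ hΔ _ ih => exact .allR hf hy hΓ hΔ ih
  | exL hf hy hΓ hΔ _ ih => exact .exL hf hy hΓ hΔ ih
  | exR hf _ ih => exact .exR hf ih
  | ref t _ ih => exact .ref t ih
  | repl h _ ih => exact .repl h ih

lemma DerC.mono {rp : Multiset (Fm L) → Multiset (Fm L) → Prop} {n m : ℕ}
    {Γ Δ : Multiset (Fm L)} (h : DerC rp n Γ Δ) (hnm : n ≤ m) : DerC rp m Γ Δ := by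
  induction hnm with
  | refl => exact h
  | step _ ih => exact ih.succ

/-- Transfer of the closure condition along growth of the antecedent base. -/
lemma cl_transfer {Γ₁' Γ₁'' D : Multiset (Fm L)}
    (hsub : ∀ a, a ∈ Γ₁' → a.IsAtomic → a ∈ Γ₁'')
    (hD : ∀ a ∈ D, a.IsAtomic ∧ Cl (· ∈ Γ₁') a) :
    ∀ a ∈ D, a.IsAtomic ∧ Cl (· ∈ Γ₁'') a := fun a ha =>
  ⟨(hD a ha).1, ((hD a ha).2).mono fun b hb hat => Cl.mem (hsub b hb hat) hat⟩

lemma mem_push {C : Fm L} {Γ₁' Ω : Multiset (Fm L)} (hC : ¬ C.IsAtomic)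
    (hsub : ∀ a ∈ Γ₁', a ∈ Ω) : ∀ a, a ∈ C ::ₘ Γ₁' → a.IsAtomic → a ∈ Ω := by
  intro a ha hat
  rcases Multiset.mem_cons.mp ha with rfl | h'
  · exact absurd hat hC
  · exact hsub a h'

/-- Main lemma: from a `G3c^=` derivation of `Γ₁ + D ⇒ Δ`, where `D` consists of
atoms in the equational closure of `Γ₁`, we get a `G3c^=⁻` derivation of `Γ₁ ⇒ Δ`. -/
lemma main {n : ℕ} {Γ₂ Δ : Multiset (Fm L)} (hd : DerC (ReplFull L) n Γ₂ Δ) :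
    ∀ Γ₁ D : Multiset (Fm L), Γ₂ = Γ₁ + D →
      (∀ a ∈ D, a.IsAtomic ∧ Cl (· ∈ Γ₁) a) →
      ∃ m, DerC (ReplMinus L) m Γ₁ Δ := by
  induction hd with
  | @ax n Γ Δ P hP =>
    intro Γ₁ D h hD
    rcases split_cons h with ⟨Γ₁', rfl, -⟩ | ⟨D', hD', -⟩
    · exact ⟨0, DerC.ax hP⟩
    · exact axMat (hD P (by rw [hD']; exact Multiset.mem_cons_self _ _)).2
  | botL =>
    intro Γ₁ D h hD
    rcases split_cons h with ⟨Γ₁', rfl, -⟩ | ⟨D', hD', -⟩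
    · exact ⟨0, DerC.botL⟩
    · exact absurd (hD _ (by rw [hD']; exact Multiset.mem_cons_self _ _)).1 not_atomic_falsum
  | @andL n Γ Δ A B _ ih =>
    intro Γ₁ D h hD
    rcases split_cons h with ⟨Γ₁', rfl, hΓ⟩ | ⟨D', hD', -⟩
    · obtain ⟨m, d⟩ := ih (A ::ₘ B ::ₘ Γ₁') D
        (by rw [hΓ, Multiset.cons_add, Multiset.cons_add])
        (cl_transfer (mem_push not_atomic_and
          (fun a h' => Multiset.mem_cons_of_mem (Multiset.mem_cons_of_mem h'))) hD)
      exact ⟨m + 1, DerC.andL d⟩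
    · exact absurd (hD _ (by rw [hD']; exact Multiset.mem_cons_self _ _)).1 not_atomic_and
  | @andR n Γ Δ A B _ _ ih1 ih2 =>
    intro Γ₁ D h hD
    obtain ⟨m1, d1⟩ := ih1 Γ₁ D h hD
    obtain ⟨m2, d2⟩ := ih2 Γ₁ D h hD
    exact ⟨max m1 m2 + 1,
      DerC.andR (d1.mono (le_max_left _ _)) (d2.mono (le_max_right _ _))⟩
  | @orL n Γ Δ A B _ _ ih1 ih2 =>
    intro Γ₁ D h hD
    rcases split_cons h with ⟨Γ₁', rfl, hΓ⟩ | ⟨D', hD', -⟩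
    · obtain ⟨m1, d1⟩ := ih1 (A ::ₘ Γ₁') D (by rw [hΓ, Multiset.cons_add])
        (cl_transfer (mem_push not_atomic_or
          (fun a h' => Multiset.mem_cons_of_mem h')) hD)
      obtain ⟨m2, d2⟩ := ih2 (B ::ₘ Γ₁') D (by rw [hΓ, Multiset.cons_add])
        (cl_transfer (mem_push not_atomic_or
          (fun a h' => Multiset.mem_cons_of_mem h')) hD)
      exact ⟨max m1 m2 + 1,
        DerC.orL (d1.mono (le_max_left _ _)) (d2.mono (le_max_right _ _))⟩
    · exact absurd (hD _ (by rw [hD']; exact Multiset.mem_cons_self _ _)).1 not_atomic_or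
  | @orR n Γ Δ A B _ ih =>
    intro Γ₁ D h hD
    obtain ⟨m, d⟩ := ih Γ₁ D h hD
    exact ⟨m + 1, DerC.orR d⟩
  | @impL n Γ Δ A B _ _ ih1 ih2 =>
    intro Γ₁ D h hD
    rcases split_cons h with ⟨Γ₁', rfl, hΓ⟩ | ⟨D', hD', -⟩
    · obtain ⟨m1, d1⟩ := ih1 Γ₁' D hΓ
        (cl_transfer (mem_push not_atomic_imp (fun a h' => h')) hD)
      obtain ⟨m2, d2⟩ := ih2 (B ::ₘ Γ₁') D (by rw [hΓ, Multiset.cons_add])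
        (cl_transfer (mem_push not_atomic_imp
          (fun a h' => Multiset.mem_cons_of_mem h')) hD)
      exact ⟨max m1 m2 + 1,
        DerC.impL (d1.mono (le_max_left _ _)) (d2.mono (le_max_right _ _))⟩
    · exact absurd (hD _ (by rw [hD']; exact Multiset.mem_cons_self _ _)).1 not_atomic_imp
  | @impR n Γ Δ A B _ ih =>
    intro Γ₁ D h hD
    obtain ⟨m, d⟩ := ih (A ::ₘ Γ₁) D (by rw [h, Multiset.cons_add])
      (cl_transfer (fun a ha _ => Multiset.mem_cons_of_mem ha) hD)
    exact ⟨m + 1, DerC.impR d⟩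
  | @allL n Γ Δ x t A hf _ ih =>
    intro Γ₁ D h hD
    rcases split_cons h with ⟨Γ₁', rfl, hΓ⟩ | ⟨D', hD', -⟩
    · obtain ⟨m, d⟩ := ih (A.subst x t ::ₘ Fm.all x A ::ₘ Γ₁') D
        (by rw [hΓ, Multiset.cons_add, Multiset.cons_add])
        (cl_transfer (mem_push not_atomic_all
          (fun a h' => Multiset.mem_cons_of_mem (Multiset.mem_cons_of_mem h'))) hD)
      exact ⟨m + 1, DerC.allL hf d⟩
    · exact absurd (hD _ (by rw [hD']; exact Multiset.mem_cons_self _ _)).1 not_atomic_all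
  | @allR n Γ Δ x y A hf hy hΓa hΔa _ ih =>
    intro Γ₁ D h hD
    obtain ⟨m, d⟩ := ih Γ₁ D h hD
    refine ⟨m + 1, DerC.allR hf hy (fun C hC => hΓa C ?_) hΔa d⟩
    rw [h]; exact Multiset.mem_add.mpr (Or.inl hC)
  | @exL n Γ Δ x y A hf hy hΓa hΔa _ ih =>
    intro Γ₁ D h hD
    rcases split_cons h with ⟨Γ₁', rfl, hΓ⟩ | ⟨D', hD', -⟩
    · obtain ⟨m, d⟩ := ih (A.subst x (Term.var y) ::ₘ Γ₁') D
        (by rw [hΓ, Multiset.cons_add])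
        (cl_transfer (mem_push not_atomic_ex
          (fun a h' => Multiset.mem_cons_of_mem h')) hD)
      refine ⟨m + 1, DerC.exL hf hy (fun C hC => hΓa C ?_) hΔa d⟩
      rw [hΓ]; exact Multiset.mem_add.mpr (Or.inl hC)
    · exact absurd (hD _ (by rw [hD']; exact Multiset.mem_cons_self _ _)).1 not_atomic_ex
  | @exR n Γ Δ x t A hf _ ih =>
    intro Γ₁ D h hD
    obtain ⟨m, d⟩ := ih Γ₁ D h hD
    exact ⟨m + 1, DerC.exR hf d⟩
  | @ref n Γ Δ t _ ih =>
    intro Γ₁ D h hD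
    obtain ⟨m, d⟩ := ih (Fm.equal t t ::ₘ Γ₁) D (by rw [h, Multiset.cons_add])
      (cl_transfer (fun a ha _ => Multiset.mem_cons_of_mem ha) hD)
    exact ⟨m + 1, DerC.ref t d⟩
  | @repl n Γp Γc Δ hrp _ ih =>
    intro Γ₁ D hc hD
    obtain ⟨s, r, v, P, Γ₀, hP, hs, hr, hpr, hcc⟩ := hrp
    have hclE : Cl (· ∈ Γ₁) (Fm.equal s r) := by
      have hmem : Fm.equal s r ∈ Γ₁ + D := by
        rw [← hc, hcc]; exact Multiset.mem_cons_self _ _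
      rcases Multiset.mem_add.mp hmem with h1 | h1
      · exact Cl.mem h1 (Fm.IsAtomic.equal _ _)
      · exact (hD _ h1).2
    have hclPs : Cl (· ∈ Γ₁) (P.subst v s) := by
      have hmem : P.subst v s ∈ Γ₁ + D := by
        rw [← hc, hcc]
        exact Multiset.mem_cons_of_mem (Multiset.mem_cons_self _ _)
      rcases Multiset.mem_add.mp hmem with h1 | h1
      · exact Cl.mem h1 (atomic_subst hP _ _)
      · exact (hD _ h1).2
    have hclPr : Cl (· ∈ Γ₁) (P.subst v r) := Cl.fwd hP hs hr hclE hclPs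
    refine ih Γ₁ (P.subst v r ::ₘ D) ?_ ?_
    · rw [hpr, Multiset.add_cons, ← hc, hcc]
      simp only [← Multiset.singleton_add]; abel
    · intro a ha
      rcases Multiset.mem_cons.mp ha with rfl | h1
      · exact ⟨atomic_subst hP _ _, hclPr⟩
      · exact hD a h1

/-- Every sequent derivable in `G3c^=` is derivable in `G3c^=⁻`. -/
theorem G3cEq_to_G3cEqMinus (L : FirstOrder.Language.{u, v})
    (Γ Δ : Multiset (Fm L)) (hd : ∃ n, DerC (ReplFull L) n Γ Δ) :
    ∃ n, DerC (ReplMinus L) n Γ Δ := by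
  obtain ⟨n, d⟩ := hd
  exact main d Γ 0 (by simp) (by simp)
end

section
/- The symmetry rule Symm is admissible in G3i^=⁻: for all terms s, r and finite multisets Γ, Δ of formulas, if the sequent s = r, Γ ⇒ Δ is derivable in G3i^=⁻, then the sequent r = s, Γ ⇒ Δ is derivable in G3i^=⁻. -/
open FirstOrder Language Multiset

universe u v

variable {L : FirstOrder.Language.{u, v}}

section Aux

variable {L : FirstOrder.Language.{u, v}}

/-! ### Term-level lemmas -/

lemma tsubst_congr {σ σ' : ℕ → L.Term ℕ} :
    ∀ t : L.Term ℕ, (∀ w, tCount w t ≠ 0 → σ w = σ' w) → t.subst σ = t.subst σ'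
  | .var w, h => by
      simp only [Term.subst]
      exact h w (by simp [tCount])
  | .func f ts, h => by
      simp only [Term.subst]
      congr 1
      funext i
      refine tsubst_congr (ts i) (fun w hw => h w ?_)
      simp only [tCount]
      intro h0
      exact hw (Finset.sum_eq_zero_iff.mp h0 i (Finset.mem_univ i))

lemma tsubst_var : ∀ t : L.Term ℕ, t.subst Term.var = t
  | .var w => rfl
  | .func f ts => by
      simp only [Term.subst]
      congr 1
      funext i
      exact tsubst_var (ts i)

lemma tcount_subst_exists {σ : ℕ → L.Term ℕ} {w : ℕ} :
    ∀ {t : L.Term ℕ}, tCount w (t.subst σ) ≠ 0 →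
      ∃ u, tCount u t ≠ 0 ∧ tCount w (σ u) ≠ 0
  | .var z, h => ⟨z, by simp [tCount], by simpa [Term.subst] using h⟩
  | .func f ts, h => by
      simp only [Term.subst, tCount] at h
      obtain ⟨i, -, hi⟩ := Finset.exists_ne_zero_of_sum_ne_zero h
      obtain ⟨u, hu, hw⟩ := tcount_subst_exists hi
      exact ⟨u, fun h0 => hu (Finset.sum_eq_zero_iff.mp h0 i (Finset.mem_univ i)), hw⟩

lemma tcount_subst_mem {σ : ℕ → L.Term ℕ} {w u : ℕ} :
    ∀ {t : L.Term ℕ}, tCount u t ≠ 0 → tCount w (σ u) ≠ 0 →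
      tCount w (t.subst σ) ≠ 0
  | .var z, ht, hσ => by
      simp only [tCount] at ht
      have hz : z = u := by by_contra h; simp [h] at ht
      subst hz
      simpa [Term.subst] using hσ
  | .func f ts, ht, hσ => by
      simp only [tCount] at ht ⊢
      obtain ⟨i, -, hi⟩ := Finset.exists_ne_zero_of_sum_ne_zero ht
      have := tcount_subst_mem hi hσ
      intro h0
      exact this (Finset.sum_eq_zero_iff.mp h0 i (Finset.mem_univ i))

/-- All variables of a term, as a finset. -/
def tvf : L.Term ℕ → Finset ℕ
  | .var v => {v}
  | .func _ ts => Finset.univ.biUnion fun i => tvf (ts i)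

lemma tCount_eq_zero_of_notMem_tvf {w : ℕ} :
    ∀ {t : L.Term ℕ}, w ∉ tvf t → tCount w t = 0
  | .var v, h => by
      simp only [tvf, Finset.mem_singleton] at h
      simp only [tCount, if_neg (fun h' : v = w => h h'.symm)]
  | .func f ts, h => by
      simp only [tvf, Finset.mem_biUnion] at h
      simp only [tCount]
      refine Finset.sum_eq_zero fun i _ => ?_
      exact tCount_eq_zero_of_notMem_tvf fun hm => h ⟨i, Finset.mem_univ i, hm⟩

/-! ### Formula-level lemmas -/

lemma Fm.IsAtomic.ssub {P : Fm L} (hP : P.IsAtomic) (σ : ℕ → L.Term ℕ) :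
    (P.ssub σ).IsAtomic := by
  cases hP with
  | equal t₁ t₂ => exact Fm.IsAtomic.equal _ _
  | rel R ts => exact Fm.IsAtomic.rel _ _

lemma Fm.IsAtomic.subst {P : Fm L} (hP : P.IsAtomic) (v : ℕ) (t : L.Term ℕ) :
    (P.subst v t).IsAtomic := hP.ssub _

/-- Key replacement lemma: every free variable of `P[v/s]` is a variable of
`s = r` or a free variable of `P[v/r]`. -/
lemma freeVars_subst_key {P : Fm L} (hP : P.IsAtomic) (v : ℕ) (s r : L.Term ℕ) {w : ℕ}
    (hw : w ∈ (P.subst v s).freeVars) :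
    (tCount w s ≠ 0 ∨ tCount w r ≠ 0) ∨ w ∈ (P.subst v r).freeVars := by
  have key : ∀ t : L.Term ℕ, tCount w (t.subst (Function.update Term.var v s)) ≠ 0 →
      tCount w s ≠ 0 ∨ tCount w (t.subst (Function.update Term.var v r)) ≠ 0 := by
    intro t ht
    obtain ⟨u, hu, hw2⟩ := tcount_subst_exists ht
    by_cases huv : u = v
    · subst huv
      rw [Function.update_self] at hw2
      exact Or.inl hw2
    · rw [Function.update_of_ne huv] at hw2
      have hwu : w = u := by
        simp only [tCount] at hw2
        by_contra hne
        rw [if_neg (fun h' : u = w => hne h'.symm)] at hw2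
        exact hw2 rfl
      subst hwu
      refine Or.inr (tcount_subst_mem hu ?_)
      rw [Function.update_of_ne huv]
      simp [tCount]
  cases hP with
  | equal t₁ t₂ =>
      simp only [Fm.subst, Fm.ssub, Fm.freeVars, Set.mem_setOf_eq] at hw ⊢
      rcases hw with h | h
      · rcases key t₁ h with h' | h'
        · exact Or.inl (Or.inl h')
        · exact Or.inr (Or.inl h')
      · rcases key t₂ h with h' | h'
        · exact Or.inl (Or.inl h')
        · exact Or.inr (Or.inr h')
  | rel R ts =>
      simp only [Fm.subst, Fm.ssub, Fm.freeVars, Set.mem_setOf_eq] at hw ⊢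
      obtain ⟨i, hi⟩ := hw
      rcases key (ts i) hi with h' | h'
      · exact Or.inl (Or.inl h')
      · exact Or.inr ⟨i, h'⟩

/-! ### Atomic-variable sets and weakening -/

/-- The free variables of the atomic formulas in `Γ`. -/
def AtVars (Γ : Multiset (Fm L)) : Set ℕ :=
  {w | ∃ C ∈ Γ, C.IsAtomic ∧ w ∈ C.freeVars}

lemma atVars_mono (C : Fm L) {Γ : Multiset (Fm L)} : AtVars Γ ⊆ AtVars (C ::ₘ Γ) :=
  fun _ ⟨D, hD, hat, hw⟩ => ⟨D, Multiset.mem_cons_of_mem hD, hat, hw⟩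

lemma mem_atVars_cons {C : Fm L} {Γ : Multiset (Fm L)} {w : ℕ} :
    w ∈ AtVars (C ::ₘ Γ) ↔ (C.IsAtomic ∧ w ∈ C.freeVars) ∨ w ∈ AtVars Γ := by
  constructor
  · rintro ⟨D, hD, hat, hw⟩
    rcases Multiset.mem_cons.mp hD with h | h
    · exact Or.inl ⟨h ▸ hat, h ▸ hw⟩
    · exact Or.inr ⟨D, h, hat, hw⟩
  · rintro (⟨hat, hw⟩ | ⟨D, hD, hat, hw⟩)
    · exact ⟨C, Multiset.mem_cons_self _ _, hat, hw⟩
    · exact ⟨D, Multiset.mem_cons_of_mem hD, hat, hw⟩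

lemma atVars_cons_not_atomic {C : Fm L} (hC : ¬ C.IsAtomic) {Γ : Multiset (Fm L)} :
    AtVars (C ::ₘ Γ) ⊆ AtVars Γ := by
  intro w hw
  rcases mem_atVars_cons.mp hw with ⟨hat, -⟩ | h
  · exact absurd hat hC
  · exact h

lemma atVars_repl {s r : L.Term ℕ} {v : ℕ} {P : Fm L} (hP : P.IsAtomic)
    {Γ : Multiset (Fm L)} :
    AtVars (Fm.equal s r ::ₘ P.subst v s ::ₘ Γ) ⊆
      AtVars (Fm.equal s r ::ₘ P.subst v r ::ₘ Γ) := by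
  intro w hw
  have hemem : (tCount w s ≠ 0 ∨ tCount w r ≠ 0) →
      w ∈ AtVars (Fm.equal s r ::ₘ P.subst v r ::ₘ Γ) := by
    intro h
    exact mem_atVars_cons.mpr (Or.inl ⟨Fm.IsAtomic.equal s r, by
      simpa [Fm.freeVars, Set.mem_setOf_eq] using h⟩)
  rcases mem_atVars_cons.mp hw with ⟨-, hw⟩ | hw
  · exact hemem (by simpa [Fm.freeVars, Set.mem_setOf_eq] using hw)
  · rcases mem_atVars_cons.mp hw with ⟨-, hw⟩ | hw
    · rcases freeVars_subst_key hP v s r hw with h | h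
      · exact hemem h
      · exact mem_atVars_cons.mpr (Or.inr (mem_atVars_cons.mpr
          (Or.inl ⟨hP.subst v r, h⟩)))
    · exact atVars_mono _ (atVars_mono _ hw)

lemma notMem_freeVars_of_atVars {W : Fm L} {Γ : Multiset (Fm L)} {y : ℕ}
    (hW : ∀ w ∈ W.freeVars, w ∈ AtVars Γ) (hΓ : ∀ C ∈ Γ, y ∉ Fm.freeVars C) :
    y ∉ W.freeVars := by
  intro hy
  obtain ⟨C, hC, -, hyC⟩ := hW y hy
  exact hΓ C hC hyC

/-- Weakening by a formula whose free variables all occur in atomic formulas of the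
antecedent is height-preserving admissible in `G3i^=⁻`. -/
lemma weak {n : ℕ} {Γ Δ : Multiset (Fm L)}
    (h : DerI (ReplMinus L) n Γ Δ) :
    ∀ W : Fm L, (∀ w ∈ W.freeVars, w ∈ AtVars Γ) → DerI (ReplMinus L) n (W ::ₘ Γ) Δ := by
  induction h with
  | @ax n Γ Δ P hP =>
      intro W hW
      rw [Multiset.cons_swap]
      exact DerI.ax hP
  | @botL n Γ Δ =>
      intro W hW
      rw [Multiset.cons_swap]
      exact DerI.botL
  | @andL n Γ Δ A B h ih =>
      intro W hW
      rw [Multiset.cons_swap]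
      refine DerI.andL ?_
      have hsub : ∀ w ∈ W.freeVars, w ∈ AtVars (A ::ₘ B ::ₘ Γ) := fun w hw =>
        atVars_mono _ (atVars_mono _ (atVars_cons_not_atomic (by rintro ⟨⟩) (hW w hw)))
      have := ih W hsub
      rw [Multiset.cons_swap W A, Multiset.cons_swap W B] at this
      exact this
  | @andR n Γ Δ A B h1 h2 ih1 ih2 =>
      intro W hW
      exact DerI.andR (ih1 W hW) (ih2 W hW)
  | @orL n Γ Δ A B h1 h2 ih1 ih2 =>
      intro W hW
      rw [Multiset.cons_swap]
      have hsub : ∀ w ∈ W.freeVars, w ∈ AtVars Γ := fun w hw =>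
        atVars_cons_not_atomic (by rintro ⟨⟩) (hW w hw)
      have t1 := ih1 W (fun w hw => atVars_mono _ (hsub w hw))
      have t2 := ih2 W (fun w hw => atVars_mono _ (hsub w hw))
      rw [Multiset.cons_swap W A] at t1
      rw [Multiset.cons_swap W B] at t2
      exact DerI.orL t1 t2
  | @orR n Γ Δ A B h ih =>
      intro W hW
      exact DerI.orR (ih W hW)
  | @impL n Γ Δ A B h1 h2 ih1 ih2 =>
      intro W hW
      rw [Multiset.cons_swap]
      have hsub : ∀ w ∈ W.freeVars, w ∈ AtVars Γ := fun w hw =>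
        atVars_cons_not_atomic (by rintro ⟨⟩) (hW w hw)
      have t1 := ih1 W hW
      rw [Multiset.cons_swap W] at t1
      have t2 := ih2 W (fun w hw => atVars_mono _ (hsub w hw))
      rw [Multiset.cons_swap W B] at t2
      exact DerI.impL t1 t2
  | @impR n Γ Δ A B h ih =>
      intro W hW
      refine DerI.impR ?_
      have := ih W (fun w hw => atVars_mono _ (hW w hw))
      rw [Multiset.cons_swap W A] at this
      exact this
  | @allL n Γ Δ x t A hf h ih =>
      intro W hW
      rw [Multiset.cons_swap]
      refine DerI.allL hf ?_
      have := ih W (fun w hw => atVars_mono _ (atVars_mono _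
        (atVars_cons_not_atomic (by rintro ⟨⟩) (hW w hw))))
      rw [Multiset.cons_swap W, Multiset.cons_swap W] at this
      exact this
  | @allR n Γ Δ x y A hf hy hΓ h ih =>
      intro W hW
      refine DerI.allR hf hy ?_ (ih W hW)
      intro C hC
      rcases Multiset.mem_cons.mp hC with h' | h'
      · exact h' ▸ notMem_freeVars_of_atVars hW hΓ
      · exact hΓ C h'
  | @exL n Γ Δ x y A hf hy hΓ hΔ h ih =>
      intro W hW
      rw [Multiset.cons_swap]
      have hsub : ∀ w ∈ W.freeVars, w ∈ AtVars Γ := fun w hw =>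
        atVars_cons_not_atomic (by rintro ⟨⟩) (hW w hw)
      have hWy : y ∉ W.freeVars := notMem_freeVars_of_atVars hsub hΓ
      refine DerI.exL hf hy ?_ hΔ ?_
      · intro C hC
        rcases Multiset.mem_cons.mp hC with h' | h'
        · exact h' ▸ hWy
        · exact hΓ C h'
      · have := ih W (fun w hw => atVars_mono _ (hsub w hw))
        rw [Multiset.cons_swap W] at this
        exact this
  | @exR n Γ Δ x t A hf h ih =>
      intro W hW
      exact DerI.exR hf (ih W hW)
  | @ref n Γ Δ t h ih =>
      intro W hW
      refine DerI.ref t ?_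
      have := ih W (fun w hw => atVars_mono _ (hW w hw))
      rw [Multiset.cons_swap W] at this
      exact this
  | @repl n Γp Γc Δ hrp h ih =>
      intro W hW
      obtain ⟨s, r, v, P, Γ0, hP, hs, hr, hΓp, hΓc⟩ := hrp
      subst hΓp; subst hΓc
      have e1 : W ::ₘ Fm.equal s r ::ₘ P.subst v s ::ₘ Γ0
          = Fm.equal s r ::ₘ P.subst v s ::ₘ W ::ₘ Γ0 := by
        rw [Multiset.cons_swap W, Multiset.cons_swap W]
      rw [e1]
      refine DerI.repl ⟨s, r, v, P, W ::ₘ Γ0, hP, hs, hr, rfl, rfl⟩ ?_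
      have := ih W (fun w hw => atVars_repl hP (hW w hw))
      rw [Multiset.cons_swap W, Multiset.cons_swap W] at this
      exact this

end Aux

/-- The symmetry rule Symm is admissible in `G3i^=⁻`: if `s = r, Γ ⇒ Δ` is derivable,
then so is `r = s, Γ ⇒ Δ`. -/
theorem symm_admissible_G3iEqMinus (L : FirstOrder.Language.{u, v})
    (s r : L.Term ℕ) (Γ Δ : Multiset (Fm L))
    (hd : ∃ n, DerI (ReplMinus L) n (Fm.equal s r ::ₘ Γ) Δ) :
    ∃ n, DerI (ReplMinus L) n (Fm.equal r s ::ₘ Γ) Δ := by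
  obtain ⟨n, hd⟩ := hd
  obtain ⟨v, hv⟩ := Infinite.exists_notMem_finset (tvf s ∪ tvf r)
  have hvs : tCount v s = 0 :=
    tCount_eq_zero_of_notMem_tvf (fun h => hv (Finset.mem_union_left _ h))
  have hvr : tCount v r = 0 :=
    tCount_eq_zero_of_notMem_tvf (fun h => hv (Finset.mem_union_right _ h))
  have hrid : ∀ u : L.Term ℕ, r.subst (Function.update Term.var v u) = r := by
    intro u
    have step : r.subst (Function.update Term.var v u) = r.subst Term.var := by
      refine tsubst_congr r ?_
      intro w hw
      have hwv : w ≠ v := fun h => hw (by rw [h]; exact hvr)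
      exact Function.update_of_ne hwv _ _
    rw [step, tsubst_var]
  have hsubs : (Fm.equal (Term.var v) r : Fm L).subst v s = Fm.equal s r := by
    simp only [Fm.subst, Fm.ssub]
    congr 1
    · simp [Term.subst]
    · exact hrid s
  have hsubr : (Fm.equal (Term.var v) r : Fm L).subst v r = Fm.equal r r := by
    simp only [Fm.subst, Fm.ssub]
    congr 1
    · simp [Term.subst]
    · exact hrid r
  have h1 : DerI (ReplMinus L) n (Fm.equal r s ::ₘ Fm.equal s r ::ₘ Γ) Δ := by
    refine weak hd (Fm.equal r s) ?_
    intro w hw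
    refine ⟨Fm.equal s r, Multiset.mem_cons_self _ _, Fm.IsAtomic.equal _ _, ?_⟩
    simp only [Fm.freeVars, Set.mem_setOf_eq] at hw ⊢
    exact hw.symm
  have h2 : DerI (ReplMinus L) (n + 1) (Fm.equal r s ::ₘ Fm.equal r r ::ₘ Γ) Δ :=
    DerI.repl ⟨r, s, v, Fm.equal (Term.var v) r, Γ, Fm.IsAtomic.equal _ _, hvr, hvs,
      by rw [hsubs], by rw [hsubr]⟩ h1
  have h3 : DerI (ReplMinus L) (n + 1) (Fm.equal r r ::ₘ Fm.equal r s ::ₘ Γ) Δ := by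
    rw [Multiset.cons_swap]
    exact h2
  exact ⟨n + 2, DerI.ref r h3⟩
end

section
/- The contraction rule for equalities, Contr^=, is admissible in G3c^=⁻: for all terms s, r and finite multisets Γ, Δ of formulas, if the sequent s = r, s = r, Γ ⇒ Δ is derivable in G3c^=⁻, then the sequent s = r, Γ ⇒ Δ is derivable in G3c^=⁻ (by one application of Repl⁻, turning one copy of s = r into s = s, followed by one application of Ref). -/
open FirstOrder Language Multiset

universe u v

variable {L : FirstOrder.Language.{u, v}}

lemma tCount_eq_zero_of_notMem_varFinset {v : ℕ} :
    ∀ t : L.Term ℕ, v ∉ t.varFinset → tCount v t = 0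
  | .var w, h => by
      simp [Term.varFinset] at h
      simp [tCount, Ne.symm h]
  | .func f ts, h => by
      simp [Term.varFinset] at h
      simp only [tCount, Finset.sum_eq_zero_iff, Finset.mem_univ, forall_true_left]
      exact fun i => tCount_eq_zero_of_notMem_varFinset (ts i) (h i)

lemma subst_update_eq_self {v : ℕ} {u : L.Term ℕ} :
    ∀ t : L.Term ℕ, tCount v t = 0 →
      t.subst (Function.update (Term.var : ℕ → L.Term ℕ) v u) = t
  | .var w, h => by
      simp [tCount] at h
      simp [Function.update, h]
  | .func f ts, h => by
      simp only [tCount, Finset.sum_eq_zero_iff, Finset.mem_univ, forall_true_left] at h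
      simp only [Term.subst]
      congr 1
      funext i
      exact subst_update_eq_self (ts i) (h i)

/-- The contraction rule for equalities Contr^= is admissible in `G3c^=⁻`:
if `s = r, s = r, Γ ⇒ Δ` is derivable, then so is `s = r, Γ ⇒ Δ`. -/
theorem contrEq_admissible_G3cEqMinus (L : FirstOrder.Language.{u, v})
    (s r : L.Term ℕ) (Γ Δ : Multiset (Fm L))
    (hd : ∃ n, DerC (ReplMinus L) n (Fm.equal s r ::ₘ Fm.equal s r ::ₘ Γ) Δ) :
    ∃ n, DerC (ReplMinus L) n (Fm.equal s r ::ₘ Γ) Δ := by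
  obtain ⟨n, hd⟩ := hd
  obtain ⟨v, hv⟩ := Infinite.exists_notMem_finset (s.varFinset ∪ r.varFinset)
  simp only [Finset.mem_union, not_or] at hv
  have hvs : tCount v s = 0 := tCount_eq_zero_of_notMem_varFinset s hv.1
  have hvr : tCount v r = 0 := tCount_eq_zero_of_notMem_varFinset r hv.2
  have hPs : (Fm.equal s (Term.var v)).subst v s = Fm.equal s s := by
    simp [Fm.subst, Fm.ssub, subst_update_eq_self s hvs, Function.update]
  have hPr : (Fm.equal s (Term.var v)).subst v r = Fm.equal s r := by
    simp [Fm.subst, Fm.ssub, subst_update_eq_self s hvs, Function.update]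
  have h1 : DerC (ReplMinus L) (n + 1) (Fm.equal s r ::ₘ Fm.equal s s ::ₘ Γ) Δ :=
    DerC.repl ⟨s, r, v, Fm.equal s (Term.var v), Γ, Fm.IsAtomic.equal _ _, hvs, hvr,
      by rw [hPr], by rw [hPs]⟩ hd
  rw [Multiset.cons_swap] at h1
  exact ⟨n + 2, DerC.ref s h1⟩
end
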